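/- Assume s < 0. Fix i ∈ V and let N̄ = {j ∈ V : j ≠ i and j is not adjacent to i} be the non-neighbourhood of i, and assume N̄ is nonempty. Then ⟨y_i, y_j⟩ = μ for every j ∈ N̄ while ⟨y_i, y_i⟩ = s² + k ≠ μ; consequently the affine dimension of P(N̄) is strictly smaller than the affine dimension of P(N̄ ∪ {i}). -/

import Mathlib

open scoped RealInnerProductSpace

/-- The `i`-th column of `y = A - s·I`, where `A` is the real adjacency matrix of `G`,
viewed as a point of Euclidean space `ℝ^V`. -/
noncomputable def srgCol {V : Type*} [Fintype V] [DecidableEq V]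
    (G : SimpleGraph V) [DecidableRel G.Adj] (s : ℝ) (i : V) : EuclideanSpace ℝ V :=
  (WithLp.equiv 2 (V → ℝ)).symm fun j => (G.adjMatrix ℝ - s • (1 : Matrix V V ℝ)) j i


/-- The affine dimension of a point set: the finrank of the direction of its affine span. -/
noncomputable def adim {V : Type*} [Fintype V] (X : Set (EuclideanSpace ℝ V)) : ℕ :=
  Module.finrank ℝ (affineSpan ℝ X).direction

lemma inner_srgCol {V : Type*} [Fintype V] [DecidableEq V]
    (G : SimpleGraph V) [DecidableRel G.Adj] (s : ℝ) (i j : V) :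
    ⟪srgCol G s i, srgCol G s j⟫ =
      ((G.adjMatrix ℝ - s • (1 : Matrix V V ℝ)) *
        (G.adjMatrix ℝ - s • (1 : Matrix V V ℝ))) i j := by
  have hsymm : ∀ a b : V, (G.adjMatrix ℝ - s • (1 : Matrix V V ℝ)) a b
      = (G.adjMatrix ℝ - s • (1 : Matrix V V ℝ)) b a := by
    intro a b
    simp [Matrix.sub_apply, Matrix.smul_apply, Matrix.one_apply, SimpleGraph.adjMatrix_apply,
      SimpleGraph.adj_comm, eq_comm]
  simp only [PiLp.inner_apply, RCLike.inner_apply, starRingEnd_apply, star_trivial,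
    Matrix.mul_apply, srgCol, WithLp.equiv_symm_apply, WithLp.ofLp_toLp]
  exact Finset.sum_congr rfl fun r _ => by rw [hsymm r i, mul_comm]

theorem stmt_8 {V : Type*} [Fintype V] [DecidableEq V]
    (G : SimpleGraph V) [DecidableRel G.Adj] (v k l m : ℕ)
    (hG : G.IsSRGWith v k l m)
    (s : ℝ) (hs : s < 0) (i : V)
    (N : Set V) (hN : N = {j : V | j ≠ i ∧ ¬G.Adj i j}) (hNne : N.Nonempty) :
    (∀ j ∈ N, ⟪srgCol G s i, srgCol G s j⟫ = (m : ℝ)) ∧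
    ⟪srgCol G s i, srgCol G s i⟫ = s ^ 2 + (k : ℝ) ∧
    s ^ 2 + (k : ℝ) ≠ (m : ℝ) ∧
    adim (srgCol G s '' N) < adim (srgCol G s '' (N ∪ {i})) := by
  have hsq : (G.adjMatrix ℝ - s • (1 : Matrix V V ℝ)) *
      (G.adjMatrix ℝ - s • (1 : Matrix V V ℝ))
      = (k : ℝ) • (1 : Matrix V V ℝ) + (l : ℝ) • G.adjMatrix ℝ + (m : ℝ) • Gᶜ.adjMatrix ℝ
        - (2 * s) • G.adjMatrix ℝ + (s ^ 2) • (1 : Matrix V V ℝ) := by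
    have h2 : G.adjMatrix ℝ * G.adjMatrix ℝ
        = (k : ℝ) • (1 : Matrix V V ℝ) + (l : ℝ) • G.adjMatrix ℝ + (m : ℝ) • Gᶜ.adjMatrix ℝ := by
      have := hG.matrix_eq (α := ℝ)
      rw [pow_two] at this
      rw [this]
      simp only [← Nat.cast_smul_eq_nsmul ℝ]
    rw [Matrix.sub_mul, Matrix.mul_sub, Matrix.mul_sub, h2]
    rw [Matrix.smul_mul, Matrix.mul_smul, Matrix.smul_mul, Matrix.mul_smul]
    simp only [Matrix.one_mul, Matrix.mul_one, smul_smul]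
    ring_nf
    abel_nf
    module
  have key : ∀ j ∈ N, ⟪srgCol G s i, srgCol G s j⟫ = (m : ℝ) := by
    intro j hj
    rw [hN] at hj
    obtain ⟨hji, hnadj⟩ := hj
    rw [inner_srgCol, hsq]
    simp [Matrix.add_apply, Matrix.sub_apply, Matrix.smul_apply, Matrix.one_apply,
      SimpleGraph.adjMatrix_apply, hji.symm, Ne.symm hji, hnadj, SimpleGraph.compl_adj,
      fun h : G.Adj i j => hnadj h]
  have keyi : ⟪srgCol G s i, srgCol G s i⟫ = s ^ 2 + (k : ℝ) := by
    rw [inner_srgCol, hsq]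
    simp [Matrix.add_apply, Matrix.sub_apply, Matrix.smul_apply, Matrix.one_apply,
      SimpleGraph.adjMatrix_apply]
    ring
  obtain ⟨j0, hj0⟩ := hNne
  have hmk : (m : ℝ) ≤ (k : ℝ) := by
    have hj0' := hN ▸ hj0
    obtain ⟨hji, hnadj⟩ := hj0'
    have hm : Fintype.card (G.commonNeighbors i j0) = m :=
      hG.of_not_adj (Ne.symm hji) hnadj
    have hle : Fintype.card (G.commonNeighbors i j0) ≤ Fintype.card (G.neighborSet i) := by
      exact Set.card_le_card (G.commonNeighbors_subset_neighborSet_left i j0)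
    rw [hm, G.card_neighborSet_eq_degree, hG.regular i] at hle
    exact_mod_cast hle
  have hne : s ^ 2 + (k : ℝ) ≠ (m : ℝ) := by
    have : 0 < s ^ 2 := by nlinarith
    linarith
  refine ⟨key, keyi, hne, ?_⟩
  -- affine dimension part
  set p := srgCol G s i with hp
  set X := srgCol G s '' N with hX
  set K : Submodule ℝ (EuclideanSpace ℝ V) :=
    LinearMap.ker ((innerSL ℝ p).toLinearMap) with hK
  have hmemK : ∀ w, w ∈ K ↔ ⟪p, w⟫ = 0 := fun w => Iff.rfl
  have hdirle : (affineSpan ℝ X).direction ≤ K := by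
    rw [direction_affineSpan, vectorSpan_def]
    rw [Submodule.span_le]
    rintro w hw
    rw [Set.mem_vsub] at hw
    obtain ⟨a, ha, b, hb, rfl⟩ := hw
    obtain ⟨ja, hja, rfl⟩ := ha
    obtain ⟨jb, hjb, rfl⟩ := hb
    rw [SetLike.mem_coe, hmemK]
    have : (srgCol G s ja) -ᵥ (srgCol G s jb) = srgCol G s ja - srgCol G s jb := rfl
    rw [this, inner_sub_right, key ja hja, key jb hjb, sub_self]
  have hq : srgCol G s j0 ∈ X := Set.mem_image_of_mem _ hj0
  have hvm : p - srgCol G s j0 ∈ (affineSpan ℝ (srgCol G s '' (N ∪ {i}))).direction := by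
    have hpmem : p ∈ affineSpan ℝ (srgCol G s '' (N ∪ {i})) :=
      subset_affineSpan ℝ _ (Set.mem_image_of_mem _ (Set.mem_union_right _ rfl))
    have hqmem : srgCol G s j0 ∈ affineSpan ℝ (srgCol G s '' (N ∪ {i})) :=
      subset_affineSpan ℝ _ (Set.mem_image_of_mem _ (Set.mem_union_left _ hj0))
    exact AffineSubspace.vsub_mem_direction hpmem hqmem
  have hvnot : p - srgCol G s j0 ∉ (affineSpan ℝ X).direction := by
    intro h
    have := hdirle h
    rw [hmemK, inner_sub_right, keyi, key j0 hj0] at this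
    exact hne (by linarith)
  have hle2 : (affineSpan ℝ X).direction ≤ (affineSpan ℝ (srgCol G s '' (N ∪ {i}))).direction :=
    AffineSubspace.direction_le (affineSpan_mono ℝ (Set.image_mono Set.subset_union_left))
  have hlt : (affineSpan ℝ X).direction < (affineSpan ℝ (srgCol G s '' (N ∪ {i}))).direction :=
    lt_of_le_of_ne hle2 (fun h => hvnot (h ▸ hvm))
  exact Submodule.finrank_lt_finrank_of_lt hlt
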